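/- Let (E,τ) be a real quasi-complete locally convex space in which every separable von Neumann bounded subset is metrizable (as a subspace of E). If E has the Schur property, then every subset of E that is compact in the weak topology σ(E,E') is compact in the original topology τ. -/

import Mathlib

open Filter Topology Bornology Pointwise

/-- The weak topology σ(E,E') on a (locally convex) topological vector space `E`:
the initial topology with respect to all continuous linear functionals on `E`. -/
def weakTop (E : Type*) [AddCommGroup E] [Module ℝ E] [TopologicalSpace E] :
    TopologicalSpace E :=
  TopologicalSpace.induced (fun x (f : E →L[ℝ] ℝ) => f x) Pi.topologicalSpace

/-- A set `A` is functionally bounded for the topology `t` if every `t`-continuous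
real-valued function is bounded on `A`. -/
def FunBounded {E : Type*} (t : TopologicalSpace E) (A : Set E) : Prop :=
  ∀ f : E → ℝ, @Continuous E ℝ t _ f → ∃ C : ℝ, ∀ x ∈ A, |f x| ≤ C

/-- The Schur property: every sequence converging in the weak topology σ(E,E') to a point
converges to that point in the original topology. -/
def HasSchur (E : Type*) [AddCommGroup E] [Module ℝ E] [TopologicalSpace E] : Prop :=
  ∀ (u : ℕ → E) (a : E),
    Filter.Tendsto u Filter.atTop (@nhds E (weakTop E) a) →
    Filter.Tendsto u Filter.atTop (nhds a)

section Aux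

open Set TopologicalSpace

variable {E : Type*} [AddCommGroup E] [Module ℝ E] [TopologicalSpace E]

/-- Every continuous linear functional is continuous for the weak topology. -/
lemma weakTop_continuous (f : E →L[ℝ] ℝ) : @Continuous E ℝ (weakTop E) _ f :=
  @Continuous.comp E ((E →L[ℝ] ℝ) → ℝ) ℝ (weakTop E) _ _ _ _
    (continuous_apply f) continuous_induced_dom

/-- Convergence in the weak topology is pointwise convergence of all functionals. -/
lemma tendsto_weakTop_iff {α : Type*} {l : Filter α} {u : α → E} {a : E} :
    Tendsto u l (@nhds E (weakTop E) a) ↔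
      ∀ f : E →L[ℝ] ℝ, Tendsto (fun n => f (u n)) l (𝓝 (f a)) := by
  rw [show weakTop E =
      TopologicalSpace.induced (fun x (f : E →L[ℝ] ℝ) => f x) Pi.topologicalSpace from rfl,
    nhds_induced, tendsto_comap_iff, tendsto_pi_nhds]
  rfl

/-- The original topology is finer than the weak topology. -/
lemma le_weakTop : (inferInstance : TopologicalSpace E) ≤ weakTop E :=
  continuous_iff_le_induced.mp (continuous_pi fun f => f.continuous)

end Aux

section Aux2

open Set TopologicalSpace

/-- From compactness, every sequence has a cluster point whose neighborhoods are visited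
frequently. -/
lemma exists_seq_clusterPt {X : Type*} [TopologicalSpace X] {K : Set X} (hK : IsCompact K)
    {z : ℕ → X} (hz : ∀ n, z n ∈ K) :
    ∃ b ∈ K, ∀ N ∈ 𝓝 b, ∃ᶠ j in atTop, z j ∈ N := by
  have hle : Filter.map z atTop ≤ Filter.principal K := by
    rw [Filter.le_principal_iff, Filter.mem_map]
    exact Filter.Eventually.of_forall hz
  obtain ⟨b, hbK, hb⟩ := hK hle
  exact ⟨b, hbK, fun N hN => (mapClusterPt_iff_frequently.mp hb) N hN⟩

variable {E : Type*} [AddCommGroup E] [Module ℝ E] [TopologicalSpace E]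

/-- A weakly compact set is von Neumann bounded, given the Schur property. -/
lemma isVonNBounded_of_weaklyCompact (hSchur : HasSchur E) {A : Set E}
    (hA : @IsCompact E (weakTop E) A) : Bornology.IsVonNBounded ℝ A := by
  -- every functional is bounded on A
  have hb : ∀ f : E →L[ℝ] ℝ, ∃ C : ℝ, ∀ x ∈ A, |f x| ≤ C := by
    intro f
    have him : IsCompact (f '' A) :=
      @IsCompact.image E ℝ (weakTop E) _ A f hA (weakTop_continuous f)
    obtain ⟨C, hC⟩ := him.isBounded.exists_norm_le
    exact ⟨C, fun x hx => by simpa [Real.norm_eq_abs] using hC _ (Set.mem_image_of_mem f hx)⟩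
  by_contra hnb
  rw [Bornology.isVonNBounded_iff] at hnb
  push_neg at hnb
  obtain ⟨V, hV, hVabs⟩ := hnb
  -- extract scalars with large norms and non-absorbed points
  have hcn : ∀ n : ℕ, ∃ c : ℝ, (n + 1 : ℝ) ≤ ‖c‖ ∧ ¬A ⊆ c • V := by
    intro n
    have hfreq : ∃ᶠ c in Bornology.cobounded ℝ, ¬A ⊆ c • V := by
      have h' : ¬∀ᶠ c in Bornology.cobounded ℝ, A ⊆ c • V := hVabs
      rwa [Filter.not_eventually] at h'
    have hmem : {c : ℝ | (n + 1 : ℝ) ≤ ‖c‖} ∈ Bornology.cobounded ℝ := by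
      have hball : Bornology.IsBounded (Metric.ball (0 : ℝ) (n + 1)) := Metric.isBounded_ball
      rw [Bornology.isBounded_def] at hball
      refine Filter.mem_of_superset hball ?_
      intro c hc
      simpa [Metric.mem_ball, Real.dist_eq, not_lt, abs_sub_comm, Real.norm_eq_abs] using hc
    obtain ⟨c, hc1, hc2⟩ := (hfreq.and_eventually hmem).exists
    exact ⟨c, hc2, hc1⟩
  choose c hc hcA using hcn
  have hcne : ∀ n, (c n) ≠ 0 := by
    intro n hn
    have h' := hc n
    rw [hn] at h'
    simp only [norm_zero] at h'
    nlinarith [Nat.cast_nonneg (α := ℝ) n]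
  have hx : ∀ n : ℕ, ∃ x ∈ A, x ∉ c n • V := by
    intro n
    obtain ⟨x, hx1, hx2⟩ := Set.not_subset.mp (hcA n)
    exact ⟨x, hx1, hx2⟩
  choose x hxA hxV using hx
  -- the rescaled sequence tends to zero weakly
  set u : ℕ → E := fun n => (c n)⁻¹ • x n with hu
  have huweak : Tendsto u atTop (@nhds E (weakTop E) 0) := by
    rw [tendsto_weakTop_iff]
    intro f
    obtain ⟨C, hC⟩ := hb f
    have hC0 : 0 ≤ C := le_trans (abs_nonneg _) (hC _ (hxA 0))
    rw [map_zero]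
    rw [Metric.tendsto_atTop]
    intro ε hε
    obtain ⟨N, hN⟩ := exists_nat_gt (C / ε)
    refine ⟨N, fun n hn => ?_⟩
    have hfu : |f (u n)| = ‖c n‖⁻¹ * |f (x n)| := by
      rw [hu]
      simp only [map_smul, smul_eq_mul, abs_mul, abs_inv]
      rw [Real.norm_eq_abs]
    have h1 : |f (u n)| ≤ ‖c n‖⁻¹ * C := by
      rw [hfu]
      have : 0 < ‖c n‖ := lt_of_lt_of_le (by positivity) (hc n)
      exact mul_le_mul_of_nonneg_left (hC _ (hxA n)) (by positivity)
    have hcn' : (n + 1 : ℝ) ≤ ‖c n‖ := hc n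
    have hn1 : (0:ℝ) < n + 1 := by positivity
    have h2 : ‖c n‖⁻¹ * C ≤ C / (n + 1) := by
      have hinv : ‖c n‖⁻¹ ≤ (n + 1 : ℝ)⁻¹ := by
        apply inv_anti₀ hn1 hcn'
      calc ‖c n‖⁻¹ * C ≤ (n + 1 : ℝ)⁻¹ * C := mul_le_mul_of_nonneg_right hinv hC0
        _ = C / (n + 1) := by rw [inv_mul_eq_div]
    have h3 : C / (n + 1 : ℝ) < ε := by
      have hNn : (C / ε) < n + 1 := lt_of_lt_of_le hN (by exact_mod_cast Nat.le_succ_of_le hn)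
      rw [div_lt_iff₀ hn1]
      have hmul := mul_lt_mul_of_pos_right hNn hε
      rw [div_mul_cancel₀ C (ne_of_gt hε)] at hmul
      linarith
    have : |f (u n)| < ε := lt_of_le_of_lt (h1.trans h2) h3
    simpa [Real.dist_eq] using this
  -- hence tends to zero in the original topology
  have huτ : Tendsto u atTop (𝓝 0) := hSchur u 0 huweak
  have hev : ∀ᶠ n in atTop, u n ∈ V := huτ.eventually_mem hV
  obtain ⟨n, hn⟩ := hev.exists
  apply hxV n
  have : x n = c n • u n := by
    rw [hu]; simp [smul_smul, mul_inv_cancel₀ (hcne n)]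
  rw [this]
  exact Set.smul_mem_smul_set hn

end Aux2

section Aux3

open Set TopologicalSpace

variable {E : Type*} [AddCommGroup E] [Module ℝ E] [TopologicalSpace E]
  [IsTopologicalAddGroup E]

/-- The closure of a von Neumann bounded set is von Neumann bounded. -/
lemma isVonNBounded_closure' [ContinuousSMul ℝ E] {A : Set E}
    (h : Bornology.IsVonNBounded ℝ A) : Bornology.IsVonNBounded ℝ (closure A) := by
  intro V hV
  obtain ⟨W, hWmem, hWcl, hWV⟩ := exists_mem_nhds_isClosed_subset hV
  filter_upwards [h hWmem, eventually_ne_cobounded (0 : ℝ)] with r hr hr0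
  calc closure A ⊆ r • W := closure_minimal hr (hWcl.smul_of_ne_zero hr0)
    _ ⊆ r • V := Set.smul_set_mono hWV

/-- The convex hull of a von Neumann bounded set is von Neumann bounded, in a locally
convex space. -/
lemma isVonNBounded_convexHull' [LocallyConvexSpace ℝ E] {A : Set E}
    (h : Bornology.IsVonNBounded ℝ A) : Bornology.IsVonNBounded ℝ (convexHull ℝ A) := by
  intro V hV
  obtain ⟨C, hCmem, hCconv, hCV⟩ :=
    (locallyConvexSpace_iff_exists_convex_subset_zero ℝ E).mp ‹_› V hV
  filter_upwards [h hCmem] with r hr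
  exact (convexHull_min hr (hCconv.smul r)).trans (Set.smul_set_mono hCV)

/-- A closed convex set is closed in the weak topology (Mazur). -/
lemma isClosed_weakTop_of_convex [ContinuousSMul ℝ E] [LocallyConvexSpace ℝ E]
    {s : Set E} (hconv : Convex ℝ s) (hcl : IsClosed s) : @IsClosed E (weakTop E) s := by
  refine (@isOpen_compl_iff E s (weakTop E)).mp ?_
  refine (@isOpen_iff_mem_nhds E (weakTop E) sᶜ).mpr ?_
  intro x hx
  obtain ⟨f, u, hfs, hfx⟩ := geometric_hahn_banach_closed_point hconv hcl hx
  have hopen : @IsOpen E (weakTop E) (f ⁻¹' Set.Ioi u) :=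
    @Continuous.isOpen_preimage E ℝ (weakTop E) _ f (weakTop_continuous f) (Set.Ioi u) isOpen_Ioi
  refine Filter.mem_of_superset
    (@IsOpen.mem_nhds E (weakTop E) _ _ hopen (by simpa using hfx)) ?_
  intro y hy hys
  exact lt_irrefl _ ((hfs y hys).trans hy)

end Aux3

section Aux4

open Set TopologicalSpace

/-- A set containing a countable subset in whose closure it lies is a separable subspace. -/
lemma separableSpace_of_dense_subset {X : Type*} [TopologicalSpace X] {s c : Set X}
    (hc : c.Countable) (hcs : c ⊆ s) (hdense : s ⊆ closure c) : SeparableSpace ↥s := by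
  refine ⟨⟨Subtype.val ⁻¹' c, hc.preimage Subtype.val_injective, fun x => ?_⟩⟩
  rw [closure_subtype, Set.image_preimage_eq_inter_range, Subtype.range_val,
    Set.inter_eq_left.mpr hcs]
  exact hdense x.2

/-- A separable subspace contains a countable subset in whose closure it lies. -/
lemma exists_countable_dense_subset_of_separable {X : Type*} [TopologicalSpace X] (s : Set X)
    [SeparableSpace ↥s] : ∃ c ⊆ s, c.Countable ∧ s ⊆ closure c := by
  obtain ⟨c', hc'cnt, hc'dense⟩ := TopologicalSpace.exists_countable_dense ↥s
  refine ⟨Subtype.val '' c', Set.image_subset_iff.mpr (fun x _ => x.2), hc'cnt.image _, ?_⟩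
  intro x hx
  have h := hc'dense ⟨x, hx⟩
  rwa [closure_subtype] at h

variable {E : Type*} [AddCommGroup E] [Module ℝ E] [TopologicalSpace E]
  [IsTopologicalAddGroup E] [ContinuousSMul ℝ E]

/-- The image of a separable set under a continuous map is a separable subspace. -/
lemma separableSpace_image {X Y : Type*} [TopologicalSpace X] [TopologicalSpace Y] {s : Set X}
    {f : X → Y} [SeparableSpace ↥s] (hf : Continuous f) : SeparableSpace ↥(f '' s) := by
  obtain ⟨c, hcs, hccnt, hcd⟩ := exists_countable_dense_subset_of_separable s
  refine separableSpace_of_dense_subset (c := f '' c) (hccnt.image f)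
    (Set.image_mono hcs) ?_
  rintro - ⟨x, hx, rfl⟩
  exact (image_closure_subset_closure_image hf) ⟨x, hcd hx, rfl⟩

/-- The convex hull of a finite set is a separable subspace. -/
lemma separableSpace_convexHull_finset (t : Finset E) :
    SeparableSpace ↥(convexHull ℝ (↑t : Set E)) := by
  classical
  have hft : (↑t : Set E).Finite := t.finite_toSet
  rw [hft.convexHull_eq_image (R := ℝ)]
  exact separableSpace_image (LinearMap.continuous_on_pi _)

/-- The convex hull of a countable set has a countable subset in whose closure it lies. -/
lemma exists_countable_dense_convexHull {S : Set E} (hS : S.Countable) :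
    ∃ c ⊆ convexHull ℝ S, c.Countable ∧ convexHull ℝ S ⊆ closure c := by
  classical
  have hfin : ∀ t : Finset E, ∃ c ⊆ convexHull ℝ (↑t : Set E), c.Countable ∧
      convexHull ℝ (↑t : Set E) ⊆ closure c := by
    intro t
    haveI := separableSpace_convexHull_finset t
    exact exists_countable_dense_subset_of_separable _
  choose c hc1 hc2 hc3 using hfin
  have hcnt : {t : Finset E | ↑t ⊆ S}.Countable := by
    have h1 := Set.countable_setOf_finite_subset hS
    have h2 : {t : Finset E | ↑t ⊆ S} ⊆
        (fun t : Finset E => (↑t : Set E)) ⁻¹' {u : Set E | u.Finite ∧ u ⊆ S} :=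
      fun t ht => ⟨t.finite_toSet, ht⟩
    exact (h1.preimage Finset.coe_injective).mono h2
  refine ⟨⋃ t ∈ {t : Finset E | ↑t ⊆ S}, c t, ?_, ?_, ?_⟩
  · exact Set.iUnion₂_subset fun t ht => (hc1 t).trans (convexHull_mono ht)
  · exact hcnt.biUnion fun t _ => hc2 t
  · rw [convexHull_eq_union_convexHull_finite_subsets]
    refine Set.iUnion₂_subset fun t ht => ?_
    intro y hy
    exact closure_mono (Set.subset_biUnion_of_mem (u := fun t => c t) ht) (hc3 t hy)

end Aux4

/-- A real quasi-complete locally convex space whose separable von Neumann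
bounded sets are metrizable and which has the Schur property weakly respects compactness. -/
theorem schur_weakly_respects_compactness_of_quasiComplete
    (E : Type*) [AddCommGroup E] [Module ℝ E] [UniformSpace E] [IsUniformAddGroup E]
    [ContinuousSMul ℝ E] [LocallyConvexSpace ℝ E]
    (hqc : ∀ A : Set E, IsClosed A → Bornology.IsVonNBounded ℝ A → IsComplete A)
    (hmetr : ∀ A : Set E, Bornology.IsVonNBounded ℝ A → TopologicalSpace.IsSeparable A →
      TopologicalSpace.MetrizableSpace A)
    (hSchur : HasSchur E) :
    ∀ A : Set E, @IsCompact E (weakTop E) A → IsCompact A := by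
  intro A hA
  classical
  have hfc : ∀ f : E →L[ℝ] ℝ, @Continuous E ℝ (weakTop E) _ f := fun f => weakTop_continuous f
  have hbdd : Bornology.IsVonNBounded ℝ A := isVonNBounded_of_weaklyCompact hSchur hA
  -- Step 1: A is totally bounded.
  have hTB : TotallyBounded A := by
    by_contra hTB
    simp only [TotallyBounded] at hTB
    push_neg at hTB
    obtain ⟨d, hd, hdt⟩ := hTB
    -- construct a d-separated sequence in A
    obtain ⟨x, hxA, hxsep⟩ := exists_seq_of_forall_finset_exists (· ∈ A)
      (fun u v => (v, u) ∉ d) (by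
        intro t _
        obtain ⟨y, hyA, hyn⟩ := Set.not_subset.mp (hdt ↑t t.finite_toSet)
        refine ⟨y, hyA, fun z hz hzy => ?_⟩
        exact hyn (Set.mem_biUnion hz hzy))
    set S : Set E := Set.range x with hS
    have hScnt : S.Countable := Set.countable_range x
    have hSbdd : Bornology.IsVonNBounded ℝ S :=
      Bornology.IsVonNBounded.subset (Set.range_subset_iff.mpr hxA) hbdd
    set D : Set E := closure (convexHull ℝ S) with hD
    have hDbdd : Bornology.IsVonNBounded ℝ D :=
      isVonNBounded_closure' (isVonNBounded_convexHull' hSbdd)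
    obtain ⟨q, hqsub, hqcnt, hqdense⟩ := exists_countable_dense_convexHull hScnt
    have hDq : D ⊆ closure q := closure_minimal hqdense isClosed_closure
    have hDsep : TopologicalSpace.IsSeparable D := ⟨q, hqcnt, hDq⟩
    haveI hDmetr : TopologicalSpace.MetrizableSpace ↥D := hmetr D hDbdd hDsep
    haveI : TopologicalSpace.SeparableSpace ↥D :=
      separableSpace_of_dense_subset hqcnt (hqsub.trans subset_closure) hDq
    haveI : SecondCountableTopology ↥D := by
      letI m : PseudoMetricSpace ↥D := TopologicalSpace.pseudoMetrizableSpacePseudoMetric ↥D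
      letI u : UniformSpace ↥D := m.toUniformSpace
      exact UniformSpace.secondCountable_of_separable ↥D
    -- a countable family of functionals separating points of D
    obtain ⟨T, hTcnt, hTeq⟩ := TopologicalSpace.isOpen_iUnion_countable
      (fun f : E →L[ℝ] ℝ => {p : ↥D × ↥D | f ↑p.1 ≠ f ↑p.2})
      (fun f => isOpen_ne_fun ((f.continuous.comp continuous_subtype_val).comp continuous_fst)
        ((f.continuous.comp continuous_subtype_val).comp continuous_snd))
    obtain ⟨g, hg⟩ := (hTcnt.insert 0).exists_eq_range (Set.insert_nonempty 0 T)
    have hgsep : ∀ a b : E, a ∈ D → b ∈ D → (∃ f : E →L[ℝ] ℝ, f a ≠ f b) →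
        ∃ i : ℕ, g i a ≠ g i b := by
      rintro a b ha hb ⟨f, hf⟩
      have hp : (⟨a, ha⟩, ⟨b, hb⟩) ∈ ⋃ f' : E →L[ℝ] ℝ, {p : ↥D × ↥D | f' ↑p.1 ≠ f' ↑p.2} :=
        Set.mem_iUnion.mpr ⟨f, hf⟩
      rw [← hTeq] at hp
      obtain ⟨f', hf'T, hf'⟩ := Set.mem_iUnion₂.mp hp
      have hmem : f' ∈ Set.range g := by rw [← hg]; exact Set.mem_insert_of_mem _ hf'T
      obtain ⟨i, rfl⟩ := hmem
      exact ⟨i, hf'⟩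
    -- the weakly compact set K containing the sequence
    set K : Set E := A ∩ @closure E (weakTop E) S with hK
    have hKcpt : @IsCompact E (weakTop E) K :=
      @IsCompact.inter_right E (weakTop E) A (@closure E (weakTop E) S) hA
        (@isClosed_closure E (weakTop E) S)
    have hSK : ∀ n, x n ∈ K := fun n =>
      ⟨hxA n, Set.mem_of_subset_of_mem (@subset_closure E (weakTop E) S) ⟨n, rfl⟩⟩
    have hKD : K ⊆ D := by
      have hDW : @IsClosed E (weakTop E) D :=
        isClosed_weakTop_of_convex ((convex_convexHull ℝ S).closure) isClosed_closure
      have hSD : S ⊆ D := (subset_convexHull ℝ S).trans subset_closure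
      intro y hy
      exact (@closure_minimal E (weakTop E) S D hSD hDW) hy.2
    -- a weak cluster point of the sequence
    obtain ⟨a, haK, hafreq⟩ := @exists_seq_clusterPt E (weakTop E) K hKcpt x hSK
    have hfreq : ∀ k : ℕ, ∃ᶠ n in atTop, ∀ i < k, |g i (x n) - g i a| < 1 / (k + 1) := by
      intro k
      have hpos : (0 : ℝ) < 1 / ((k : ℝ) + 1) := by positivity
      have hNmem : {y : E | ∀ i < k, |g i y - g i a| < 1 / ((k : ℝ) + 1)} ∈
          @nhds E (weakTop E) a := by
        have heq : {y : E | ∀ i < k, |g i y - g i a| < 1 / ((k : ℝ) + 1)} =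
            ⋂ i ∈ Finset.range k, (fun y : E => g i y) ⁻¹' Metric.ball (g i a) (1 / ((k:ℝ) + 1)) := by
          ext y
          simp [Real.dist_eq, Finset.mem_range]
        rw [heq]
        refine (Filter.biInter_finset_mem _).mpr fun i _ => ?_
        exact @IsOpen.mem_nhds E (weakTop E) _ _
          (@Continuous.isOpen_preimage E ℝ (weakTop E) _ _ (hfc (g i)) _ Metric.isOpen_ball) (Metric.mem_ball_self hpos)
      exact hafreq _ hNmem
    obtain ⟨φ, hφmono, hφ⟩ := Filter.extraction_forall_of_frequently hfreq
    -- the subsequence converges to a along every g i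
    have hgy : ∀ i : ℕ, Tendsto (fun k => g i (x (φ k))) atTop (𝓝 (g i a)) := by
      intro i
      rw [Metric.tendsto_atTop]
      intro ε hε
      obtain ⟨m, hm⟩ := exists_nat_gt (1 / ε)
      refine ⟨max (i + 1) m, fun k hk => ?_⟩
      have hik : i < k := lt_of_lt_of_le (Nat.lt_succ_self i) (le_trans (le_max_left _ _) hk)
      have h1 := hφ k i hik
      have hkm : (m : ℝ) ≤ (k : ℝ) := by exact_mod_cast le_trans (le_max_right _ _) hk
      have h2 : 1 / ((k : ℝ) + 1) < ε := by
        rw [div_lt_iff₀ (by positivity)]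
        have h1e : 1 / ε < (k : ℝ) + 1 := lt_of_lt_of_le hm (by linarith)
        have h3 := mul_lt_mul_of_pos_right h1e hε
        rw [one_div, inv_mul_cancel₀ (ne_of_gt hε)] at h3
        linarith
      rw [Real.dist_eq]
      exact lt_trans h1 h2
    -- the subsequence converges weakly to a
    have hyweak : Tendsto (fun k => x (φ k)) atTop (@nhds E (weakTop E) a) := by
      rw [tendsto_weakTop_iff]
      by_contra hcon
      push_neg at hcon
      obtain ⟨f₀, hf₀⟩ := hcon
      rw [Metric.tendsto_atTop] at hf₀
      push_neg at hf₀
      obtain ⟨ε, hε, hfr⟩ := hf₀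
      obtain ⟨ψ, hψmono, hψ⟩ := Filter.extraction_of_frequently_atTop (frequently_atTop.mpr hfr)
      set z : ℕ → E := fun j => x (φ (ψ j)) with hz
      have hzK : ∀ j, z j ∈ K := fun j => hSK _
      obtain ⟨b, hbK, hbfreq⟩ := @exists_seq_clusterPt E (weakTop E) K hKcpt z hzK
      have hgz : ∀ i : ℕ, Tendsto (fun j => g i (z j)) atTop (𝓝 (g i a)) :=
        fun i => (hgy i).comp hψmono.tendsto_atTop
      have hgab : ∀ i : ℕ, g i a = g i b := by
        intro i
        by_contra hne
        have hδ : 0 < |g i a - g i b| := abs_pos.mpr (sub_ne_zero.mpr hne)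
        have hev : ∀ᶠ j in atTop, |g i (z j) - g i a| < |g i a - g i b| / 2 := by
          have h' := hgz i
          rw [Metric.tendsto_atTop] at h'
          obtain ⟨N, hN⟩ := h' (|g i a - g i b| / 2) (by positivity)
          exact Filter.eventually_atTop.mpr ⟨N, fun j hj => by
            have := hN j hj; rwa [Real.dist_eq] at this⟩
        have hfrb : ∃ᶠ j in atTop, |g i (z j) - g i b| < |g i a - g i b| / 2 := by
          have hNb : {y : E | |g i y - g i b| < |g i a - g i b| / 2} ∈
              @nhds E (weakTop E) b := by
            have heq : {y : E | |g i y - g i b| < |g i a - g i b| / 2} =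
                (fun y : E => g i y) ⁻¹' Metric.ball (g i b) (|g i a - g i b| / 2) := by
              ext y; simp [Real.dist_eq]
            rw [heq]
            exact @IsOpen.mem_nhds E (weakTop E) _ _
              (@Continuous.isOpen_preimage E ℝ (weakTop E) _ _ (hfc (g i)) _ Metric.isOpen_ball)
              (Metric.mem_ball_self (by positivity))
          exact hbfreq _ hNb
        obtain ⟨j, hj1, hj2⟩ := (hfrb.and_eventually hev).exists
        have htri : |g i a - g i b| ≤ |g i a - g i (z j)| + |g i (z j) - g i b| :=
          abs_sub_le _ _ _
        have hcomm : |g i a - g i (z j)| = |g i (z j) - g i a| := abs_sub_comm _ _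
        linarith
      have hf0ab : f₀ a ≠ f₀ b := by
        intro heq
        have hNb : {y : E | |f₀ y - f₀ b| < ε / 2} ∈ @nhds E (weakTop E) b := by
          have heq2 : {y : E | |f₀ y - f₀ b| < ε / 2} =
              (fun y : E => f₀ y) ⁻¹' Metric.ball (f₀ b) (ε / 2) := by
            ext y; simp [Real.dist_eq]
          rw [heq2]
          exact @IsOpen.mem_nhds E (weakTop E) _ _
            (@Continuous.isOpen_preimage E ℝ (weakTop E) _ _ (hfc f₀) _ Metric.isOpen_ball)
            (Metric.mem_ball_self (by positivity))
        obtain ⟨j, hj⟩ := (hbfreq _ hNb).exists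
        have h1 := hψ j
        rw [Real.dist_eq, heq] at h1
        simp only [Set.mem_setOf_eq] at hj
        linarith
      obtain ⟨i, hi⟩ := hgsep a b (hKD haK) (hKD hbK) ⟨f₀, hf0ab⟩
      exact hi (hgab i)
    -- Schur property: convergence in the original topology, contradicting separation
    have hyτ : Tendsto (fun k => x (φ k)) atTop (𝓝 a) := hSchur _ _ hyweak
    have hcau : CauchySeq (fun k => x (φ k)) := hyτ.cauchySeq
    rw [cauchySeq_iff] at hcau
    obtain ⟨N, hN⟩ := hcau d hd
    exact hxsep (φ N) (φ (N + 1)) (hφmono (Nat.lt_succ_self N))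
      (hN (N + 1) (Nat.le_succ N) N (le_refl N))
  -- Step 2: the closure of A is compact.
  have hclcpt : IsCompact (closure A) :=
    isCompact_iff_totallyBounded_isComplete.mpr
      ⟨hTB.closure, hqc _ isClosed_closure (isVonNBounded_closure' hbdd)⟩
  -- Step 3: A itself is compact.
  rw [isCompact_iff_ultrafilter_le_nhds]
  intro F hF
  have hFcl : ↑F ≤ Filter.principal (closure A) :=
    hF.trans (Filter.principal_mono.mpr subset_closure)
  obtain ⟨c0, hc0cl, hFc0⟩ := hclcpt.ultrafilter_le_nhds F hFcl
  obtain ⟨a, haA, hacl⟩ := hA hF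
  have hacl' : Filter.NeBot ((@nhds E (weakTop E) a) ⊓ ↑F) := hacl
  have hFa : ↑F ≤ @nhds E (weakTop E) a := F.le_of_inf_neBot' hacl'
  have hFc0w : ↑F ≤ @nhds E (weakTop E) c0 :=
    hFc0.trans (@nhds_mono E UniformSpace.toTopologicalSpace (weakTop E) c0 le_weakTop)
  have hfeq : ∀ f : E →L[ℝ] ℝ, f c0 = f a := by
    intro f
    by_contra hne
    have h0 : 0 < |f c0 - f a| := abs_pos.mpr (sub_ne_zero.mpr hne)
    have h1 : {y : E | |f y - f c0| < |f c0 - f a| / 2} ∈ F := by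
      refine hFc0w ?_
      have heq2 : {y : E | |f y - f c0| < |f c0 - f a| / 2} =
          (fun y : E => f y) ⁻¹' Metric.ball (f c0) (|f c0 - f a| / 2) := by
        ext y; simp [Real.dist_eq]
      rw [heq2]
      exact @IsOpen.mem_nhds E (weakTop E) _ _
        (@Continuous.isOpen_preimage E ℝ (weakTop E) _ _ (hfc f) _ Metric.isOpen_ball)
        (Metric.mem_ball_self (by positivity))
    have h2 : {y : E | |f y - f a| < |f c0 - f a| / 2} ∈ F := by
      refine hFa ?_
      have heq2 : {y : E | |f y - f a| < |f c0 - f a| / 2} =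
          (fun y : E => f y) ⁻¹' Metric.ball (f a) (|f c0 - f a| / 2) := by
        ext y; simp [Real.dist_eq]
      rw [heq2]
      exact @IsOpen.mem_nhds E (weakTop E) _ _
        (@Continuous.isOpen_preimage E ℝ (weakTop E) _ _ (hfc f) _ Metric.isOpen_ball)
        (Metric.mem_ball_self (by positivity))
    obtain ⟨y, hy1, hy2⟩ := Filter.nonempty_of_mem (Filter.inter_mem h1 h2)
    simp only [Set.mem_setOf_eq] at hy1 hy2
    have htri : |f c0 - f a| ≤ |f c0 - f y| + |f y - f a| := abs_sub_le _ _ _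
    have hcomm : |f c0 - f y| = |f y - f c0| := abs_sub_comm _ _
    linarith
  have hWeq : @nhds E (weakTop E) c0 = @nhds E (weakTop E) a := by
    have h1 := @nhds_induced ((E →L[ℝ] ℝ) → ℝ) E _ (fun y (f : E →L[ℝ] ℝ) => f y) c0
    have h2 := @nhds_induced ((E →L[ℝ] ℝ) → ℝ) E _ (fun y (f : E →L[ℝ] ℝ) => f y) a
    have h3 : (fun f : E →L[ℝ] ℝ => f c0) = (fun f : E →L[ℝ] ℝ => f a) := funext hfeq
    show @nhds E (TopologicalSpace.induced (fun y (f : E →L[ℝ] ℝ) => f y) Pi.topologicalSpace) c0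
      = @nhds E (TopologicalSpace.induced (fun y (f : E →L[ℝ] ℝ) => f y) Pi.topologicalSpace) a
    rw [h1, h2, h3]
  have hconst : Tendsto (fun _ : ℕ => c0) atTop (@nhds E (weakTop E) a) := by
    rw [← hWeq]
    exact @tendsto_const_nhds E (weakTop E) ℕ c0 atTop
  have hcτ : Tendsto (fun _ : ℕ => c0) atTop (𝓝 a) := hSchur _ _ hconst
  have hpure : pure c0 ≤ 𝓝 a := by
    intro s hs
    obtain ⟨n, hn⟩ := (hcτ.eventually_mem hs).exists
    rwa [Filter.mem_pure]
  have hspec : 𝓝 c0 ≤ 𝓝 a := specializes_iff_pure.mpr hpure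
  exact ⟨a, haA, hFc0.trans hspec⟩
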